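/- Let F ∈ ℤ[α_1, …, α_N] be homogeneous of degree 2N and q an odd prime power. Then (F)_q ≡ −(F|_{α_1=1})_q − (F|_{α_1=0, α_2=1})_q + (F|_{α_1=0, α_2=0})_q mod q, where (G)_q denotes the Legendre sum of G over points of the corresponding affine space over F_q. -/

import Mathlib

open MvPolynomial

/-- The Legendre symbol on a finite field: the number of square roots of `a` minus 1. -/
noncomputable def leg (F : Type*) [Field F] (a : F) : ℤ :=
  (Nat.card {x : F // x ^ 2 = a} : ℤ) - 1

/-- The Legendre sum of an integer polynomial over all points of affine space over `K`. -/
noncomputable def legSum (K : Type*) [Field K] [Fintype K] {m : ℕ}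
    (G : MvPolynomial (Fin m) ℤ) : ℤ :=
  ∑ α : Fin m → K, leg K (MvPolynomial.aeval α G)

section Aux

variable {K : Type*} [Field K]

lemma leg_sq_mul (u : K) (hu : u ≠ 0) (a : K) : leg K (u ^ 2 * a) = leg K a := by
  unfold leg
  congr 2
  refine Nat.card_congr ⟨fun x => ⟨u⁻¹ * x.1, ?_⟩, fun x => ⟨u * x.1, ?_⟩, ?_, ?_⟩
  · have h2 := x.2
    field_simp
    rw [h2]
  · rw [mul_pow, x.2]
  · rintro ⟨x, hx⟩; ext; field_simp
  · rintro ⟨x, hx⟩; ext; field_simp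

lemma eval_smul_of_isHomogeneous {m N : ℕ} (F : MvPolynomial (Fin m) K)
    (h : F.IsHomogeneous N) (c : K) (x : Fin m → K) :
    eval (c • x) F = c ^ N * eval x F := by
  rw [eval_eq', eval_eq', Finset.mul_sum]
  refine Finset.sum_congr rfl fun d hd => ?_
  have hne : coeff d F ≠ 0 := mem_support_iff.mp hd
  have hdeg : ∑ i, d i = N := by
    have hw := h hne
    rw [show (1 : Fin m → ℕ) = fun _ => 1 from rfl, ← Finsupp.degree_eq_weight_one] at hw
    rw [← hw, Finsupp.degree]
    exact (Finset.sum_subset (Finset.subset_univ _)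
      (fun i _ hi => Finsupp.notMem_support_iff.mp hi)).symm
  have : ∀ i : Fin m, (c • x) i ^ d i = c ^ d i * x i ^ d i := by
    intro i; rw [Pi.smul_apply, smul_eq_mul, mul_pow]
  simp_rw [this]
  rw [Finset.prod_mul_distrib, Finset.prod_pow_eq_pow_sum, hdeg]
  ring

variable [Fintype K]

lemma sum_step {m : ℕ} (f : (Fin (m + 1) → K) → ℤ)
    (hsc : ∀ t : K, t ≠ 0 → ∀ β : Fin (m + 1) → K, f (t • β) = f β) :
    ∑ α : Fin (m + 1) → K, f α =
      ((Fintype.card K : ℤ) - 1) * ∑ β : Fin m → K, f (Fin.cons 1 β)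
        + ∑ β : Fin m → K, f (Fin.cons 0 β) := by
  classical
  have h1 : ∑ α : Fin (m + 1) → K, f α
      = ∑ p : K × (Fin m → K), f (Fin.cons p.1 p.2) :=
    (Fintype.sum_equiv (Fin.consEquiv (fun _ => K)) _ _ (fun p => rfl)).symm
  rw [h1, Fintype.sum_prod_type]
  rw [← Finset.sum_erase_add Finset.univ _ (Finset.mem_univ (0 : K))]
  have h2 : ∀ t ∈ Finset.univ.erase (0 : K),
      ∑ β : Fin m → K, f (Fin.cons t β) = ∑ β : Fin m → K, f (Fin.cons 1 β) := by
    intro t ht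
    have htne : t ≠ 0 := (Finset.mem_erase.mp ht).1
    refine (Fintype.sum_equiv (MulAction.toPerm (Units.mk0 t htne)) _ _ fun β => ?_).symm
    have hcons : Fin.cons t ((Units.mk0 t htne) • β) = t • (Fin.cons 1 β : Fin (m + 1) → K) := by
      funext i
      refine Fin.cases ?_ (fun j => ?_) i <;>
        simp [Units.smul_def, smul_eq_mul]
    rw [MulAction.toPerm_apply, hcons, hsc t htne]
  rw [Finset.sum_congr rfl h2, Finset.sum_const, Finset.card_erase_of_mem (Finset.mem_univ _),
    Finset.card_univ, nsmul_eq_mul]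
  have hc : ((Fintype.card K - 1 : ℕ) : ℤ) = (Fintype.card K : ℤ) - 1 := by
    have := Fintype.card_pos (α := K)
    omega
  rw [hc]

lemma aeval_eq_eval_map {m : ℕ} (F : MvPolynomial (Fin m) ℤ) (x : Fin m → K) :
    (aeval x F : K) = eval x (map (algebraMap ℤ K) F) := by
  rw [aeval_def, eval₂_eq_eval_map]

end Aux

theorem affine_reduction (K : Type*) [Field K] [Fintype K]
    (hodd : Odd (Fintype.card K)) (n : ℕ)
    (F : MvPolynomial (Fin (n + 2)) ℤ) (hhom : F.IsHomogeneous (2 * (n + 2))) :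
    legSum K F ≡
      -legSum K (aeval (Fin.cases (1 : MvPolynomial (Fin (n + 1)) ℤ) (fun k => X k)) F)
      - legSum K (aeval (Fin.cases (0 : MvPolynomial (Fin n) ℤ)
          (Fin.cases (1 : MvPolynomial (Fin n) ℤ) (fun k => X k))) F)
      + legSum K (aeval (Fin.cases (0 : MvPolynomial (Fin n) ℤ)
          (Fin.cases (0 : MvPolynomial (Fin n) ℤ) (fun k => X k))) F)
      [ZMOD (Fintype.card K : ℤ)] := by
  set q : ℤ := (Fintype.card K : ℤ) with hq
  have hhomK : (map (algebraMap ℤ K) F).IsHomogeneous (2 * (n + 2)) :=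
    hhom.map _
  -- scaling invariance of the summand
  have key : ∀ t : K, t ≠ 0 → ∀ x : Fin (n + 2) → K,
      leg K (aeval (t • x) F) = leg K (aeval x F) := by
    intro t ht x
    rw [aeval_eq_eval_map, aeval_eq_eval_map,
      eval_smul_of_isHomogeneous _ hhomK t x]
    have : t ^ (2 * (n + 2)) = (t ^ (n + 2)) ^ 2 := by
      rw [← pow_mul]; ring_nf
    rw [this, leg_sq_mul _ (pow_ne_zero _ ht)]
  -- first application of sum_step
  have step1 : legSum K F =
      (q - 1) * ∑ β : Fin (n + 1) → K, leg K (aeval (Fin.cons 1 β) F)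
        + ∑ β : Fin (n + 1) → K, leg K (aeval (Fin.cons 0 β) F) := by
    exact sum_step (fun α => leg K (aeval α F)) (fun t ht β => key t ht β)
  -- second application, to the zero slice
  have key2 : ∀ t : K, t ≠ 0 → ∀ β : Fin (n + 1) → K,
      leg K (aeval (Fin.cons 0 (t • β) : Fin (n + 2) → K) F)
        = leg K (aeval (Fin.cons 0 β : Fin (n + 2) → K) F) := by
    intro t ht β
    have : (Fin.cons 0 (t • β) : Fin (n + 2) → K)
        = t • (Fin.cons 0 β : Fin (n + 2) → K) := by
      funext i
      refine Fin.cases ?_ (fun j => ?_) i <;> simp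
    rw [this, key t ht]
  have step2 : ∑ β : Fin (n + 1) → K, leg K (aeval (Fin.cons 0 β) F) =
      (q - 1) * ∑ γ : Fin n → K, leg K (aeval (Fin.cons 0 (Fin.cons 1 γ)) F)
        + ∑ γ : Fin n → K, leg K (aeval (Fin.cons 0 (Fin.cons 0 γ)) F) := by
    exact sum_step (fun β => leg K (aeval (Fin.cons 0 β : Fin (n + 2) → K) F))
      (fun t ht β => key2 t ht β)
  -- identify the slices with legSums of substituted polynomials
  have comp1 : ∀ β : Fin (n + 1) → K,
      (aeval β (aeval (Fin.cases (1 : MvPolynomial (Fin (n + 1)) ℤ) (fun k => X k)) F) : K)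
        = aeval (Fin.cons 1 β) F := by
    intro β
    rw [comp_aeval_apply]
    have hfun : (fun i => (aeval β) (Fin.cases (motive := fun _ => MvPolynomial (Fin (n + 1)) ℤ)
        1 (fun k => X k) i)) = Fin.cons 1 β := by
      funext i
      induction i using Fin.cases with
      | zero => simp
      | succ j => simp
    rw [hfun]
  have comp2 : ∀ γ : Fin n → K,
      (aeval γ (aeval (Fin.cases (0 : MvPolynomial (Fin n) ℤ)
          (Fin.cases (1 : MvPolynomial (Fin n) ℤ) (fun k => X k))) F) : K)
        = aeval (Fin.cons 0 (Fin.cons 1 γ)) F := by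
    intro γ
    rw [comp_aeval_apply]
    have hfun : (fun i => (aeval γ) (Fin.cases (motive := fun _ => MvPolynomial (Fin n) ℤ)
        0 (Fin.cases (motive := fun _ => MvPolynomial (Fin n) ℤ) 1 (fun k => X k)) i))
        = Fin.cons 0 (Fin.cons 1 γ) := by
      funext i
      induction i using Fin.cases with
      | zero => simp
      | succ j =>
        rw [Fin.cases_succ, Fin.cons_succ]
        induction j using Fin.cases with
        | zero => simp
        | succ k => simp
    rw [hfun]
  have comp3 : ∀ γ : Fin n → K,
      (aeval γ (aeval (Fin.cases (0 : MvPolynomial (Fin n) ℤ)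
          (Fin.cases (0 : MvPolynomial (Fin n) ℤ) (fun k => X k))) F) : K)
        = aeval (Fin.cons 0 (Fin.cons 0 γ)) F := by
    intro γ
    rw [comp_aeval_apply]
    have hfun : (fun i => (aeval γ) (Fin.cases (motive := fun _ => MvPolynomial (Fin n) ℤ)
        0 (Fin.cases (motive := fun _ => MvPolynomial (Fin n) ℤ) 0 (fun k => X k)) i))
        = Fin.cons 0 (Fin.cons 0 γ) := by
      funext i
      induction i using Fin.cases with
      | zero => simp
      | succ j =>
        rw [Fin.cases_succ, Fin.cons_succ]
        induction j using Fin.cases with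
        | zero => simp
        | succ k => simp
    rw [hfun]
  set A := legSum K (aeval (Fin.cases (1 : MvPolynomial (Fin (n + 1)) ℤ) (fun k => X k)) F)
    with hA
  set B := legSum K (aeval (Fin.cases (0 : MvPolynomial (Fin n) ℤ)
      (Fin.cases (1 : MvPolynomial (Fin n) ℤ) (fun k => X k))) F) with hB
  set C := legSum K (aeval (Fin.cases (0 : MvPolynomial (Fin n) ℤ)
      (Fin.cases (0 : MvPolynomial (Fin n) ℤ) (fun k => X k))) F) with hC
  have hAeq : ∑ β : Fin (n + 1) → K, leg K (aeval (Fin.cons 1 β) F) = A := by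
    rw [hA]; unfold legSum
    exact Finset.sum_congr rfl fun β _ => by rw [comp1 β]
  have hBeq : ∑ γ : Fin n → K, leg K (aeval (Fin.cons 0 (Fin.cons 1 γ)) F) = B := by
    rw [hB]; unfold legSum
    exact Finset.sum_congr rfl fun γ _ => by rw [comp2 γ]
  have hCeq : ∑ γ : Fin n → K, leg K (aeval (Fin.cons 0 (Fin.cons 0 γ)) F) = C := by
    rw [hC]; unfold legSum
    exact Finset.sum_congr rfl fun γ _ => by rw [comp3 γ]
  have htotal : legSum K F = (q - 1) * A + ((q - 1) * B + C) := by
    rw [step1, hAeq, step2, hBeq, hCeq]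
  rw [htotal]
  have : -A - B + C - ((q - 1) * A + ((q - 1) * B + C)) = q * (-(A + B)) := by ring
  exact Int.modEq_iff_dvd.mpr ⟨-(A + B), this⟩
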